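/- The open triangle Δ (the interior of a 2-simplex in RP^2), equipped with its Hilbert metric d_Δ, is isometric to a 2-dimensional normed vector space. In particular (Δ, d_Δ) does not have thin triangles (is not Gromov hyperbolic). -/

import Mathlib

open Classical

/-- The open triangle: interior of a 2-simplex in an affine chart `ℝ² ⊂ RP²`. -/
def openTriangle : Set (EuclideanSpace ℝ (Fin 2)) :=
  {x | 0 < x 0 ∧ 0 < x 1 ∧ x 0 + x 1 < 1}

/-- The Hilbert distance between `x` and `y` in a bounded open convex `Ω ⊂ ℝ²` equals
`d`: either `x = y` and `d = 0`, or `x, y` lie on a chord with endpoints `p, q ∈ Fr Ω`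
at parameters `s, t ∈ (0,1)` and `d` is given by the cross-ratio formula. -/
def HilbertDistEq (Ω : Set (EuclideanSpace ℝ (Fin 2)))
    (x y : EuclideanSpace ℝ (Fin 2)) (d : ℝ) : Prop :=
  (x = y ∧ d = 0) ∨
  ∃ p q : EuclideanSpace ℝ (Fin 2), p ∈ frontier Ω ∧ q ∈ frontier Ω ∧
    ∃ s t : ℝ, s ∈ Set.Ioo (0:ℝ) 1 ∧ t ∈ Set.Ioo (0:ℝ) 1 ∧
      x = p + s • (q - p) ∧ y = p + t • (q - p) ∧
      d = |Real.log ((s / (1 - s)) * ((1 - t) / t))| / 2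

/-- The Hilbert distance, as a function (well defined on pairs of points of the domain). -/
noncomputable def hilbertDist (Ω : Set (EuclideanSpace ℝ (Fin 2)))
    (x y : EuclideanSpace ℝ (Fin 2)) : ℝ :=
  if h : ∃ d, HilbertDistEq Ω x y d then h.choose else 0



noncomputable def ctr : EuclideanSpace ℝ (Fin 2) := WithLp.toLp 2 (fun _ => 1/4)

lemma coord_cont (i : Fin 2) : Continuous fun x : EuclideanSpace ℝ (Fin 2) => x i :=
  (EuclideanSpace.proj i).continuous

lemma openTriangle_isOpen : IsOpen openTriangle := by
  have h0 := coord_cont 0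
  have h1 := coord_cont 1
  have : openTriangle = (fun x : EuclideanSpace ℝ (Fin 2) => x 0) ⁻¹' Set.Ioi 0 ∩
      ((fun x : EuclideanSpace ℝ (Fin 2) => x 1) ⁻¹' Set.Ioi 0 ∩
       (fun x : EuclideanSpace ℝ (Fin 2) => x 0 + x 1) ⁻¹' Set.Iio 1) := by
    ext x; simp [openTriangle, and_assoc]
  rw [this]
  exact (isOpen_Ioi.preimage h0).inter ((isOpen_Ioi.preimage h1).inter
    (isOpen_Iio.preimage (h0.add h1)))

lemma closure_openTriangle : closure openTriangle =
    {x | 0 ≤ x 0 ∧ 0 ≤ x 1 ∧ x 0 + x 1 ≤ 1} := by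
  apply le_antisymm
  · apply closure_minimal
    · intro x hx
      exact ⟨hx.1.le, hx.2.1.le, hx.2.2.le⟩
    · have h0 := coord_cont 0
      have h1 := coord_cont 1
      have : {x : EuclideanSpace ℝ (Fin 2) | 0 ≤ x 0 ∧ 0 ≤ x 1 ∧ x 0 + x 1 ≤ 1} =
          (fun x : EuclideanSpace ℝ (Fin 2) => x 0) ⁻¹' Set.Ici 0 ∩
          ((fun x : EuclideanSpace ℝ (Fin 2) => x 1) ⁻¹' Set.Ici 0 ∩
           (fun x : EuclideanSpace ℝ (Fin 2) => x 0 + x 1) ⁻¹' Set.Iic 1) := by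
        ext x; simp [and_assoc]
      rw [this]
      exact (isClosed_Ici.preimage h0).inter ((isClosed_Ici.preimage h1).inter
        (isClosed_Iic.preimage (h0.add h1)))
  · intro x hx
    obtain ⟨hx0, hx1, hxs⟩ := hx
    rw [mem_closure_iff_seq_limit]
    refine ⟨fun n => x + (1/(n+2) : ℝ) • (ctr - x), ?_, ?_⟩
    · intro n
      have hn : (0:ℝ) < 1/(n+2) := by positivity
      have hn1 : (1:ℝ)/(n+2) ≤ 1 := by
        rw [div_le_one (by positivity)]; linarith [Nat.cast_nonneg (α := ℝ) n]
      set t : ℝ := 1/(n+2)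
      have e0 : (x + t • (ctr - x)) 0 = x 0 + t * ((1/4:ℝ) - x 0) := by
        simp [PiLp.add_apply, PiLp.smul_apply, PiLp.sub_apply, ctr]
      have e1 : (x + t • (ctr - x)) 1 = x 1 + t * ((1/4:ℝ) - x 1) := by
        simp [PiLp.add_apply, PiLp.smul_apply, PiLp.sub_apply, ctr]
      have hmem : x + t • (ctr - x) ∈ openTriangle := by
        refine ⟨?_, ?_, ?_⟩
        · rw [e0]; nlinarith
        · rw [e1]; nlinarith
        · rw [e0, e1]; nlinarith
      exact hmem
    · have h2 : Filter.Tendsto (fun n : ℕ => ((n:ℝ)+2)) Filter.atTop Filter.atTop :=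
        Filter.tendsto_atTop_add_const_right _ 2 tendsto_natCast_atTop_atTop
      have h3 := h2.inv_tendsto_atTop
      have h4 : Filter.Tendsto (fun n : ℕ => (1/((n:ℝ)+2))) Filter.atTop (nhds 0) := by
        simp only [one_div]; exact h3
      have := (h4.smul_const (ctr - x)).const_add x
      simpa using this

lemma frontier_openTriangle : frontier openTriangle =
    {x | (0 ≤ x 0 ∧ 0 ≤ x 1 ∧ x 0 + x 1 ≤ 1) ∧ x ∉ openTriangle} := by
  rw [frontier, closure_openTriangle, openTriangle_isOpen.interior_eq]
  ext x; simp [Set.mem_diff, and_assoc]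

/-- If `β > 1`, all barycentric coordinates at parameter `β` are nonneg and one is zero,
then `β/(β-1)` equals the max ratio. -/
lemma ratio_sup (u0 u1 u2 v0 v1 v2 β : ℝ)
    (hu0 : 0 < u0) (hu1 : 0 < u1) (hu2 : 0 < u2)
    (hv0 : 0 < v0) (hv1 : 0 < v1) (hv2 : 0 < v2)
    (hβ : 1 < β)
    (h0 : 0 ≤ u0 + β*(v0-u0)) (h1 : 0 ≤ u1 + β*(v1-u1)) (h2 : 0 ≤ u2 + β*(v2-u2))
    (hZ : u0 + β*(v0-u0) = 0 ∨ u1 + β*(v1-u1) = 0 ∨ u2 + β*(v2-u2) = 0) :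
    β/(β-1) = max (u0/v0) (max (u1/v1) (u2/v2)) := by
  have hβ' : 0 < β - 1 := by linarith
  have key : ∀ u v : ℝ, 0 < u → 0 < v → 0 ≤ u + β*(v-u) → u/v ≤ β/(β-1) := by
    intro u v hu hv h
    rw [div_le_div_iff₀ hv hβ']
    nlinarith
  have keq : ∀ u v : ℝ, 0 < u → 0 < v → u + β*(v-u) = 0 → β/(β-1) = u/v := by
    intro u v hu hv h
    rw [div_eq_div_iff hβ'.ne' hv.ne']
    nlinarith
  apply le_antisymm
  · rcases hZ with h | h | h
    · exact le_max_of_le_left (keq _ _ hu0 hv0 h).le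
    · exact le_max_of_le_right (le_max_of_le_left (keq _ _ hu1 hv1 h).le)
    · exact le_max_of_le_right (le_max_of_le_right (keq _ _ hu2 hv2 h).le)
  · exact max_le (key _ _ hu0 hv0 h0) (max_le (key _ _ hu1 hv1 h1) (key _ _ hu2 hv2 h2))

/-- Core value computation: parameters `α < 0 < 1 < β` hitting the boundary give the
log of product of max ratios. -/
lemma core_val (u0 u1 u2 v0 v1 v2 α β : ℝ)
    (hu0 : 0 < u0) (hu1 : 0 < u1) (hu2 : 0 < u2)
    (hv0 : 0 < v0) (hv1 : 0 < v1) (hv2 : 0 < v2)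
    (hα : α < 0) (hβ : 1 < β)
    (ha0 : 0 ≤ u0 + α*(v0-u0)) (ha1 : 0 ≤ u1 + α*(v1-u1)) (ha2 : 0 ≤ u2 + α*(v2-u2))
    (haZ : u0 + α*(v0-u0) = 0 ∨ u1 + α*(v1-u1) = 0 ∨ u2 + α*(v2-u2) = 0)
    (hb0 : 0 ≤ u0 + β*(v0-u0)) (hb1 : 0 ≤ u1 + β*(v1-u1)) (hb2 : 0 ≤ u2 + β*(v2-u2))
    (hbZ : u0 + β*(v0-u0) = 0 ∨ u1 + β*(v1-u1) = 0 ∨ u2 + β*(v2-u2) = 0) :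
    Real.log ((β * (1-α)) / ((-α) * (β-1))) =
      Real.log (max (u0/v0) (max (u1/v1) (u2/v2)) * max (v0/u0) (max (v1/u1) (v2/u2))) := by
  have e1 : β/(β-1) = max (u0/v0) (max (u1/v1) (u2/v2)) :=
    ratio_sup u0 u1 u2 v0 v1 v2 β hu0 hu1 hu2 hv0 hv1 hv2 hβ hb0 hb1 hb2 hbZ
  have e2 : (1-α)/(1-α-1) = max (v0/u0) (max (v1/u1) (v2/u2)) := by
    apply ratio_sup v0 v1 v2 u0 u1 u2 (1-α) hv0 hv1 hv2 hu0 hu1 hu2 (by linarith)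
    · nlinarith
    · nlinarith
    · nlinarith
    · rcases haZ with h | h | h
      · left; nlinarith
      · right; left; nlinarith
      · right; right; nlinarith
  have e2' : (1-α)/(-α) = max (v0/u0) (max (v1/u1) (v2/u2)) := by
    rw [← e2]; ring_nf
  rw [← e1, ← e2']
  congr 1
  field_simp

noncomputable def Mratio (x y : EuclideanSpace ℝ (Fin 2)) : ℝ :=
  max (x 0 / y 0) (max (x 1 / y 1) ((1 - x 0 - x 1) / (1 - y 0 - y 1)))

noncomputable def Dtri (x y : EuclideanSpace ℝ (Fin 2)) : ℝ :=
  Real.log (Mratio x y * Mratio y x) / 2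

lemma Dtri_self (x : EuclideanSpace ℝ (Fin 2)) (hx : x ∈ openTriangle) : Dtri x x = 0 := by
  obtain ⟨h0, h1, hs⟩ := hx
  have : Mratio x x = 1 := by
    unfold Mratio
    rw [div_self (by linarith), div_self (by linarith), div_self (by linarith)]
    simp
  simp [Dtri, this]

lemma frontier_mem_iff {p : EuclideanSpace ℝ (Fin 2)} (hp : p ∈ frontier openTriangle) :
    0 ≤ p 0 ∧ 0 ≤ p 1 ∧ p 0 + p 1 ≤ 1 ∧ (p 0 = 0 ∨ p 1 = 0 ∨ p 0 + p 1 = 1) := by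
  rw [frontier_openTriangle] at hp
  obtain ⟨⟨h0, h1, hs⟩, hn⟩ := hp
  refine ⟨h0, h1, hs, ?_⟩
  by_contra hc
  push_neg at hc
  exact hn ⟨lt_of_le_of_ne h0 (Ne.symm hc.1), lt_of_le_of_ne h1 (Ne.symm hc.2.1),
    lt_of_le_of_ne hs hc.2.2⟩

set_option maxHeartbeats 1000000 in
lemma witness_val_aux (x y p q : EuclideanSpace ℝ (Fin 2)) (s t : ℝ)
    (hx : x ∈ openTriangle) (hy : y ∈ openTriangle)
    (hp : p ∈ frontier openTriangle) (hq : q ∈ frontier openTriangle)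
    (hs : s ∈ Set.Ioo (0:ℝ) 1) (ht : t ∈ Set.Ioo (0:ℝ) 1)
    (hxe : x = p + s • (q - p)) (hye : y = p + t • (q - p))
    (hst : s < t) :
    |Real.log ((s / (1 - s)) * ((1 - t) / t))| / 2 = Dtri x y := by
  obtain ⟨hs0, hs1⟩ := hs
  obtain ⟨ht0, ht1⟩ := ht
  have hts : t - s ≠ 0 := by linarith
  have hst' : s - t ≠ 0 := by linarith
  set α : ℝ := s/(s-t) with hα
  set β : ℝ := (1-s)/(t-s) with hβ
  have hαneg : α < 0 := div_neg_of_pos_of_neg hs0 (by linarith)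
  have hts0 : (0:ℝ) < t - s := by linarith
  have hβ1 : 1 < β := by
    rw [hβ, one_lt_div hts0]
    linarith
  have hyx : y - x = (t-s) • (q - p) := by
    rw [hxe, hye]; module
  have hαs : α * (t - s) = -s := by
    rw [hα, div_mul_eq_mul_div, div_eq_iff hst']; try ring
  have hβs : β * (t - s) = 1 - s := by
    rw [hβ, div_mul_eq_mul_div, div_eq_iff hts]; try ring
  have hpe : p = x + α • (y - x) := by
    rw [hyx, smul_smul, hαs, hxe]; module
  have hqe : q = x + β • (y - x) := by
    rw [hyx, smul_smul, hβs, hxe]; module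
  obtain ⟨hx0, hx1, hxs⟩ := hx
  obtain ⟨hy0, hy1, hys⟩ := hy
  have hu2 : (0:ℝ) < 1 - x 0 - x 1 := by linarith
  have hv2 : (0:ℝ) < 1 - y 0 - y 1 := by linarith
  have hp0 : p 0 = x 0 + α * (y 0 - x 0) := by
    rw [hpe]; simp [PiLp.add_apply, PiLp.smul_apply, PiLp.sub_apply]
  have hp1 : p 1 = x 1 + α * (y 1 - x 1) := by
    rw [hpe]; simp [PiLp.add_apply, PiLp.smul_apply, PiLp.sub_apply]
  have hq0 : q 0 = x 0 + β * (y 0 - x 0) := by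
    rw [hqe]; simp [PiLp.add_apply, PiLp.smul_apply, PiLp.sub_apply]
  have hq1 : q 1 = x 1 + β * (y 1 - x 1) := by
    rw [hqe]; simp [PiLp.add_apply, PiLp.smul_apply, PiLp.sub_apply]
  obtain ⟨hpa0, hpa1, hpas, hpz⟩ := frontier_mem_iff hp
  obtain ⟨hqa0, hqa1, hqas, hqz⟩ := frontier_mem_iff hq
  rw [hp0] at hpa0 hpz
  rw [hp1] at hpa1 hpz
  rw [hp0, hp1] at hpas
  rw [hq0] at hqa0 hqz
  rw [hq1] at hqa1 hqz
  rw [hq0, hq1] at hqas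
  have key := core_val (x 0) (x 1) (1 - x 0 - x 1) (y 0) (y 1) (1 - y 0 - y 1) α β
    hx0 hx1 hu2 hy0 hy1 hv2 hαneg hβ1
    hpa0 hpa1 (by nlinarith)
    (by rcases hpz with h | h | h
        · exact Or.inl h
        · exact Or.inr (Or.inl h)
        · exact Or.inr (Or.inr (by linear_combination -h)))
    hqa0 hqa1 (by nlinarith)
    (by rcases hqz with h | h | h
        · exact Or.inl h
        · exact Or.inr (Or.inl h)
        · exact Or.inr (Or.inr (by linear_combination -h)))
  have hr : (s / (1 - s)) * ((1 - t) / t) = (s*(1-t))/((1-s)*t) := by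
    field_simp
  have hrpos : 0 < (s*(1-t))/((1-s)*t) :=
    div_pos (by nlinarith) (by nlinarith)
  have hrlt : (s*(1-t))/((1-s)*t) < 1 := by
    rw [div_lt_one (by nlinarith)]
    nlinarith
  have hlogneg : Real.log ((s*(1-t))/((1-s)*t)) < 0 := Real.log_neg hrpos hrlt
  have habs : |Real.log ((s / (1 - s)) * ((1 - t) / t))| =
      Real.log (((1-s)*t)/(s*(1-t))) := by
    rw [hr, abs_of_neg hlogneg, ← Real.log_inv]
    congr 1
    rw [inv_div]
  have hident : ((1-s)*t)/(s*(1-t)) = (β * (1-α)) / ((-α) * (β-1)) := by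
    rw [div_eq_div_iff (mul_ne_zero (ne_of_gt hs0) (by linarith))
      (mul_ne_zero (ne_of_gt (by linarith : (0:ℝ) < -α)) (ne_of_gt (by linarith : (0:ℝ) < β - 1)))]
    rw [hα, hβ]
    field_simp
    try ring
    try simp
    try tauto
  rw [habs, hident, key]
  rfl

lemma openTriangle_frontier_disjoint {z : EuclideanSpace ℝ (Fin 2)}
    (hz : z ∈ openTriangle) (hzf : z ∈ frontier openTriangle) : False := by
  rw [frontier_openTriangle] at hzf
  exact hzf.2 hz

lemma witness_val (x y p q : EuclideanSpace ℝ (Fin 2)) (s t : ℝ)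
    (hx : x ∈ openTriangle) (hy : y ∈ openTriangle)
    (hp : p ∈ frontier openTriangle) (hq : q ∈ frontier openTriangle)
    (hs : s ∈ Set.Ioo (0:ℝ) 1) (ht : t ∈ Set.Ioo (0:ℝ) 1)
    (hxe : x = p + s • (q - p)) (hye : y = p + t • (q - p)) :
    |Real.log ((s / (1 - s)) * ((1 - t) / t))| / 2 = Dtri x y := by
  rcases lt_trichotomy s t with hst | hst | hst
  · exact witness_val_aux x y p q s t hx hy hp hq hs ht hxe hye hst
  · -- s = t, so x = y
    have hxy : x = y := by rw [hxe, hye, hst]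
    subst hxy
    rw [Dtri_self x hx]
    subst hst
    have h1 : s / (1 - s) * ((1 - s) / s) = 1 := by
      have h0 : (0:ℝ) < (1-s)*s := by nlinarith [hs.1, hs.2]
      rw [div_mul_div_comm, mul_comm s (1-s)]
      exact div_self (ne_of_gt h0)
    rw [h1]
    simp
  · -- t < s: swap p and q
    have h1 : x = q + (1-s) • (p - q) := by
      rw [hxe]; module
    have h2 : y = q + (1-t) • (p - q) := by
      rw [hye]; module
    have := witness_val_aux x y q p (1-s) (1-t) hx hy hq hp
      ⟨by linarith [hs.2], by linarith [hs.1]⟩ ⟨by linarith [ht.2], by linarith [ht.1]⟩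
      h1 h2 (by linarith)
    rw [← this]
    congr 1
    have hs0 := hs.1; have hs1 := hs.2; have ht0 := ht.1; have ht1 := ht.2
    have e : (1-s) / (1 - (1-s)) * ((1 - (1-t)) / (1-t)) =
        ((s / (1 - s)) * ((1 - t) / t))⁻¹ := by
      rw [mul_inv, inv_div, inv_div]
      congr 2
      · ring
      · ring_nf
    rw [e, Real.log_inv, abs_neg]

set_option maxHeartbeats 1000000 in
lemma exists_ab (u0 u1 u2 v0 v1 v2 : ℝ)
    (hu0 : 0 < u0) (hu1 : 0 < u1) (hu2 : 0 < u2)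
    (hv0 : 0 < v0) (hv1 : 0 < v1) (hv2 : 0 < v2)
    (hus : u0 + u1 + u2 = 1) (hvs : v0 + v1 + v2 = 1)
    (hne : u0 ≠ v0 ∨ u1 ≠ v1) :
    ∃ a b : ℝ, a < 0 ∧ 1 < b ∧
      (0 ≤ u0 + a*(v0-u0) ∧ 0 ≤ u1 + a*(v1-u1) ∧ 0 ≤ u2 + a*(v2-u2)) ∧
      (u0 + a*(v0-u0) = 0 ∨ u1 + a*(v1-u1) = 0 ∨ u2 + a*(v2-u2) = 0) ∧
      (0 ≤ u0 + b*(v0-u0) ∧ 0 ≤ u1 + b*(v1-u1) ∧ 0 ≤ u2 + b*(v2-u2)) ∧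
      (u0 + b*(v0-u0) = 0 ∨ u1 + b*(v1-u1) = 0 ∨ u2 + b*(v2-u2) = 0) := by
  have hu0' : u0 < 1 := by linarith
  have hu1' : u1 < 1 := by linarith
  have hu2' : u2 < 1 := by linarith
  have hv0' : v0 < 1 := by linarith
  have hv1' : v1 < 1 := by linarith
  have hv2' : v2 < 1 := by linarith
  set K : Set ℝ := {r | 0 ≤ u0 + r*(v0-u0) ∧ 0 ≤ u1 + r*(v1-u1) ∧ 0 ≤ u2 + r*(v2-u2)}
    with hK
  have hKmem : ∀ r, r ∈ K ↔
      (0 ≤ u0 + r*(v0-u0) ∧ 0 ≤ u1 + r*(v1-u1) ∧ 0 ≤ u2 + r*(v2-u2)) := fun r => Iff.rfl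
  have hKc : IsClosed K := by
    have h1 : Continuous fun r : ℝ => u0 + r*(v0-u0) := by fun_prop
    have h2 : Continuous fun r : ℝ => u1 + r*(v1-u1) := by fun_prop
    have h3 : Continuous fun r : ℝ => u2 + r*(v2-u2) := by fun_prop
    have : K = (fun r : ℝ => u0 + r*(v0-u0)) ⁻¹' Set.Ici 0 ∩
        ((fun r : ℝ => u1 + r*(v1-u1)) ⁻¹' Set.Ici 0 ∩
         (fun r : ℝ => u2 + r*(v2-u2)) ⁻¹' Set.Ici 0) := by
      ext r; simp [hK, and_assoc]
    rw [this]
    exact (isClosed_Ici.preimage h1).inter ((isClosed_Ici.preimage h2).inter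
      (isClosed_Ici.preimage h3))
  have hK0 : (0:ℝ) ∈ K := by
    rw [hKmem]
    refine ⟨by nlinarith, by nlinarith, by nlinarith⟩
  have hbound : ∀ r ∈ K, |r| ≤ 1/|v0-u0| ∨ True := fun r _ => Or.inr trivial
  -- bound : any r in K satisfies bounds from a coordinate where u,v differ
  have hkey : ∀ (u v : ℝ), 0 < u → u < 1 → 0 < v → v < 1 → u ≠ v →
      ∀ r ∈ K, (0 ≤ u + r*(v-u)) → (u + r*(v-u) ≤ 1) → |r| ≤ 1/|v-u| := by
    intro u v hu hu' hv hv' huv r _ h1 h2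
    have hd : |v - u| > 0 := abs_pos.mpr (sub_ne_zero.mpr (Ne.symm huv))
    rw [le_div_iff₀ hd]
    have : |r * (v-u)| ≤ 1 := by
      rw [abs_le]
      constructor <;> nlinarith
    rw [abs_mul] at this
    linarith
  have hsum : ∀ r ∈ K, u0 + r*(v0-u0) ≤ 1 ∧ u1 + r*(v1-u1) ≤ 1 ∧ u2 + r*(v2-u2) ≤ 1 := by
    intro r hr
    rw [hKmem] at hr
    have hzero : r*(v0-u0) + r*(v1-u1) + r*(v2-u2) = 0 := by
      linear_combination r*hvs - r*hus
    refine ⟨by linarith [hr.2.1, hr.2.2], by linarith [hr.1, hr.2.2], by linarith [hr.1, hr.2.1]⟩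
  have hBdd : ∃ c : ℝ, ∀ r ∈ K, |r| ≤ c := by
    rcases hne with h | h
    · exact ⟨1/|v0-u0|, fun r hr => hkey u0 v0 hu0 hu0' hv0 hv0' h r hr ((hKmem r).mp hr).1
        (hsum r hr).1⟩
    · exact ⟨1/|v1-u1|, fun r hr => hkey u1 v1 hu1 hu1' hv1 hv1' h r hr ((hKmem r).mp hr).2.1
        (hsum r hr).2.1⟩
  obtain ⟨c, hc⟩ := hBdd
  have hbb : BddBelow K := ⟨-c, fun r hr => by have := hc r hr; rw [abs_le] at this; linarith⟩
  have hba : BddAbove K := ⟨c, fun r hr => by have := hc r hr; rw [abs_le] at this; linarith⟩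
  have hKne : K.Nonempty := ⟨0, hK0⟩
  set a := sInf K with ha
  set b := sSup K with hb
  have haK : a ∈ K := hKc.csInf_mem hKne hbb
  have hbK : b ∈ K := hKc.csSup_mem hKne hba
  -- a < 0
  have hane : a < 0 := by
    set ε := min u0 (min u1 u2) with hε
    have hε0 : 0 < ε := lt_min hu0 (lt_min hu1 hu2)
    have hεu0 : ε ≤ u0 := min_le_left _ _
    have hεu1 : ε ≤ u1 := le_trans (min_le_right _ _) (min_le_left _ _)
    have hεu2 : ε ≤ u2 := le_trans (min_le_right _ _) (min_le_right _ _)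
    have hmem : -ε ∈ K := by
      rw [hKmem]
      refine ⟨?_, ?_, ?_⟩ <;> nlinarith
    have := csInf_le hbb hmem
    rw [← ha] at this
    linarith
  -- b > 1
  have hb1 : 1 < b := by
    set ε := min v0 (min v1 v2) with hε
    have hε0 : 0 < ε := lt_min hv0 (lt_min hv1 hv2)
    have hεv0 : ε ≤ v0 := min_le_left _ _
    have hεv1 : ε ≤ v1 := le_trans (min_le_right _ _) (min_le_left _ _)
    have hεv2 : ε ≤ v2 := le_trans (min_le_right _ _) (min_le_right _ _)
    have hmem : 1 + ε ∈ K := by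
      rw [hKmem]
      refine ⟨?_, ?_, ?_⟩ <;> nlinarith
    have := le_csSup hba hmem
    rw [← hb] at this
    linarith
  have haP := (hKmem a).mp haK
  have hbP := (hKmem b).mp hbK
  -- a achieves a zero
  have haZ : u0 + a*(v0-u0) = 0 ∨ u1 + a*(v1-u1) = 0 ∨ u2 + a*(v2-u2) = 0 := by
    by_contra hcon
    push_neg at hcon
    obtain ⟨hz0, hz1, hz2⟩ := hcon
    have hp0 : 0 < u0 + a*(v0-u0) := lt_of_le_of_ne haP.1 (Ne.symm hz0)
    have hp1 : 0 < u1 + a*(v1-u1) := lt_of_le_of_ne haP.2.1 (Ne.symm hz1)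
    have hp2 : 0 < u2 + a*(v2-u2) := lt_of_le_of_ne haP.2.2 (Ne.symm hz2)
    set ε := min (u0 + a*(v0-u0)) (min (u1 + a*(v1-u1)) (u2 + a*(v2-u2))) with hε
    have hε0 : 0 < ε := lt_min hp0 (lt_min hp1 hp2)
    have hε1 : ε ≤ u0 + a*(v0-u0) := min_le_left _ _
    have hε2 : ε ≤ u1 + a*(v1-u1) := le_trans (min_le_right _ _) (min_le_left _ _)
    have hε3 : ε ≤ u2 + a*(v2-u2) := le_trans (min_le_right _ _) (min_le_right _ _)
    have hmem : a - ε ∈ K := by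
      rw [hKmem]
      refine ⟨?_, ?_, ?_⟩ <;> nlinarith
    have := csInf_le hbb hmem
    rw [← ha] at this
    linarith
  have hbZ : u0 + b*(v0-u0) = 0 ∨ u1 + b*(v1-u1) = 0 ∨ u2 + b*(v2-u2) = 0 := by
    by_contra hcon
    push_neg at hcon
    obtain ⟨hz0, hz1, hz2⟩ := hcon
    have hp0 : 0 < u0 + b*(v0-u0) := lt_of_le_of_ne hbP.1 (Ne.symm hz0)
    have hp1 : 0 < u1 + b*(v1-u1) := lt_of_le_of_ne hbP.2.1 (Ne.symm hz1)
    have hp2 : 0 < u2 + b*(v2-u2) := lt_of_le_of_ne hbP.2.2 (Ne.symm hz2)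
    set ε := min (u0 + b*(v0-u0)) (min (u1 + b*(v1-u1)) (u2 + b*(v2-u2))) with hε
    have hε0 : 0 < ε := lt_min hp0 (lt_min hp1 hp2)
    have hε1 : ε ≤ u0 + b*(v0-u0) := min_le_left _ _
    have hε2 : ε ≤ u1 + b*(v1-u1) := le_trans (min_le_right _ _) (min_le_left _ _)
    have hε3 : ε ≤ u2 + b*(v2-u2) := le_trans (min_le_right _ _) (min_le_right _ _)
    have hmem : b + ε ∈ K := by
      rw [hKmem]
      refine ⟨?_, ?_, ?_⟩ <;> nlinarith
    have := le_csSup hba hmem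
    rw [← hb] at this
    linarith
  exact ⟨a, b, hane, hb1, haP, haZ, hbP, hbZ⟩

lemma hilbertDistEq_Dtri (x y : EuclideanSpace ℝ (Fin 2))
    (hx : x ∈ openTriangle) (hy : y ∈ openTriangle) :
    HilbertDistEq openTriangle x y (Dtri x y) := by
  by_cases hxy : x = y
  · exact Or.inl ⟨hxy, by rw [hxy, Dtri_self y hy]⟩
  right
  have hne : x 0 ≠ y 0 ∨ x 1 ≠ y 1 := by
    by_contra hc
    push_neg at hc
    apply hxy
    ext i
    fin_cases i
    · exact hc.1
    · exact hc.2
  obtain ⟨hx0, hx1, hxs⟩ := hx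
  obtain ⟨hy0, hy1, hys⟩ := hy
  obtain ⟨a, b, ha0, hb1, ⟨haP0, haP1, haP2⟩, haZ, ⟨hbP0, hbP1, hbP2⟩, hbZ⟩ :=
    exists_ab (x 0) (x 1) (1 - x 0 - x 1) (y 0) (y 1) (1 - y 0 - y 1)
      hx0 hx1 (by linarith) hy0 hy1 (by linarith) (by ring) (by ring) hne
  have hba : (0:ℝ) < b - a := by linarith
  set p := x + a • (y - x) with hpdef
  set q := x + b • (y - x) with hqdef
  have hp0 : p 0 = x 0 + a * (y 0 - x 0) := by
    rw [hpdef]; simp [PiLp.add_apply, PiLp.smul_apply, PiLp.sub_apply]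
  have hp1 : p 1 = x 1 + a * (y 1 - x 1) := by
    rw [hpdef]; simp [PiLp.add_apply, PiLp.smul_apply, PiLp.sub_apply]
  have hq0 : q 0 = x 0 + b * (y 0 - x 0) := by
    rw [hqdef]; simp [PiLp.add_apply, PiLp.smul_apply, PiLp.sub_apply]
  have hq1 : q 1 = x 1 + b * (y 1 - x 1) := by
    rw [hqdef]; simp [PiLp.add_apply, PiLp.smul_apply, PiLp.sub_apply]
  have hpfr : p ∈ frontier openTriangle := by
    rw [frontier_openTriangle]
    constructor
    · refine ⟨by rw [hp0]; exact haP0, by rw [hp1]; exact haP1, ?_⟩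
      rw [hp0, hp1]; nlinarith [haP2]
    · intro hmem
      obtain ⟨c0, c1, cs⟩ := hmem
      rw [hp0] at c0
      rw [hp1] at c1
      rw [hp0, hp1] at cs
      rcases haZ with h | h | h
      · linarith
      · linarith
      · nlinarith
  have hqfr : q ∈ frontier openTriangle := by
    rw [frontier_openTriangle]
    constructor
    · refine ⟨by rw [hq0]; exact hbP0, by rw [hq1]; exact hbP1, ?_⟩
      rw [hq0, hq1]; nlinarith [hbP2]
    · intro hmem
      obtain ⟨c0, c1, cs⟩ := hmem
      rw [hq0] at c0
      rw [hq1] at c1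
      rw [hq0, hq1] at cs
      rcases hbZ with h | h | h
      · linarith
      · linarith
      · nlinarith
  set s : ℝ := (-a)/(b-a) with hsdef
  set t : ℝ := (1-a)/(b-a) with htdef
  have hsIoo : s ∈ Set.Ioo (0:ℝ) 1 := by
    constructor
    · exact div_pos (by linarith) hba
    · rw [hsdef, div_lt_one hba]; linarith
  have htIoo : t ∈ Set.Ioo (0:ℝ) 1 := by
    constructor
    · exact div_pos (by linarith) hba
    · rw [htdef, div_lt_one hba]; linarith
  have hqp : q - p = (b - a) • (y - x) := by
    rw [hpdef, hqdef]; module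
  have hgs : s * (b - a) = -a := by
    rw [hsdef, div_mul_eq_mul_div, div_eq_iff (ne_of_gt hba)]; try ring
  have hgt : t * (b - a) = 1 - a := by
    rw [htdef, div_mul_eq_mul_div, div_eq_iff (ne_of_gt hba)]; try ring
  have hxe : x = p + s • (q - p) := by
    rw [hqp, smul_smul, hgs, hpdef]; module
  have hye : y = p + t • (q - p) := by
    rw [hqp, smul_smul, hgt, hpdef]; module
  exact ⟨p, q, hpfr, hqfr, s, t, hsIoo, htIoo, hxe, hye,
    (witness_val x y p q s t ⟨hx0, hx1, hxs⟩ ⟨hy0, hy1, hys⟩ hpfr hqfr hsIoo htIoo hxe hye).symm⟩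

lemma hilbertDist_eq_Dtri (x y : EuclideanSpace ℝ (Fin 2))
    (hx : x ∈ openTriangle) (hy : y ∈ openTriangle) :
    hilbertDist openTriangle x y = Dtri x y := by
  have hex : ∃ d, HilbertDistEq openTriangle x y d := ⟨_, hilbertDistEq_Dtri x y hx hy⟩
  rw [hilbertDist, dif_pos hex]
  have hspec := hex.choose_spec
  rcases hspec with ⟨hxy, hd0⟩ | ⟨p, q, hp, hq, s, t, hs, ht, hxe, hye, hd⟩
  · rw [hd0, hxy, Dtri_self y hy]
  · rw [hd]
    exact witness_val x y p q s t hx hy hp hq hs ht hxe hye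

lemma log_max2 (a b : ℝ) (ha : 0 < a) (hb : 0 < b) :
    Real.log (max a b) = max (Real.log a) (Real.log b) := by
  rcases le_total a b with h | h
  · rw [max_eq_right h, max_eq_right ((Real.log_le_log_iff ha hb).mpr h)]
  · rw [max_eq_left h, max_eq_left ((Real.log_le_log_iff hb ha).mpr h)]

noncomputable def Ntri (v : EuclideanSpace ℝ (Fin 2)) : ℝ :=
  (max (v 0) (max (v 1) 0) - min (v 0) (min (v 1) 0)) / 2

noncomputable def phiTri (x : EuclideanSpace ℝ (Fin 2)) : EuclideanSpace ℝ (Fin 2) :=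
  WithLp.toLp 2 (fun i => Real.log (x i / (1 - x 0 - x 1)))

lemma Ntri_nonneg (v : EuclideanSpace ℝ (Fin 2)) : 0 ≤ Ntri v := by
  have h1 : (0:ℝ) ≤ max (v 0) (max (v 1) 0) := le_max_of_le_right (le_max_right _ _)
  have h2 : min (v 0) (min (v 1) 0) ≤ 0 := min_le_of_right_le (min_le_right _ _)
  unfold Ntri; linarith

lemma Ntri_eq_zero (v : EuclideanSpace ℝ (Fin 2)) : Ntri v = 0 ↔ v = 0 := by
  constructor
  · intro h
    have h1 : (0:ℝ) ≤ max (v 0) (max (v 1) 0) := le_max_of_le_right (le_max_right _ _)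
    have h2 : min (v 0) (min (v 1) 0) ≤ 0 := min_le_of_right_le (min_le_right _ _)
    unfold Ntri at h
    have hmax : max (v 0) (max (v 1) 0) = 0 := by linarith
    have hmin : min (v 0) (min (v 1) 0) = 0 := by linarith
    have hv0le : v 0 ≤ 0 := le_of_max_le_left (le_of_eq hmax)
    have hv1le : v 1 ≤ 0 := le_of_max_le_left (le_of_max_le_right (le_of_eq hmax))
    have hv0ge : 0 ≤ v 0 := hmin ▸ min_le_left _ _
    have hv1ge : 0 ≤ v 1 := hmin ▸ le_trans (min_le_right _ _) (min_le_left _ _)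
    ext i
    fin_cases i
    · show v 0 = 0; linarith
    · show v 1 = 0; linarith
  · intro h
    subst h
    unfold Ntri
    norm_num

lemma Ntri_smul (c : ℝ) (v : EuclideanSpace ℝ (Fin 2)) : Ntri (c • v) = |c| * Ntri v := by
  have h0 : (c • v) 0 = c * v 0 := by
    simp [PiLp.smul_apply, smul_eq_mul]
  have h1 : (c • v) 1 = c * v 1 := by
    simp [PiLp.smul_apply, smul_eq_mul]
  unfold Ntri
  rw [h0, h1]
  rcases le_total 0 c with hc | hc
  · rw [abs_of_nonneg hc]
    have e1 : max (c * v 0) (max (c * v 1) 0) = c * max (v 0) (max (v 1) 0) := by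
      rw [mul_max_of_nonneg _ _ hc, mul_max_of_nonneg _ _ hc, mul_zero]
    have e2 : min (c * v 0) (min (c * v 1) 0) = c * min (v 0) (min (v 1) 0) := by
      rw [mul_min_of_nonneg _ _ hc, mul_min_of_nonneg _ _ hc, mul_zero]
    rw [e1, e2]; ring
  · have hd : (0:ℝ) ≤ -c := by linarith
    have hca : ∀ z : ℝ, c * z = -((-c) * z) := fun z => by ring
    have e1 : max (c * v 0) (max (c * v 1) 0) = -(min ((-c) * v 0) (min ((-c) * v 1) 0)) := by
      conv_lhs => rw [hca (v 0), hca (v 1), ← neg_zero (G := ℝ)]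
      rw [max_neg_neg, max_neg_neg]
    have e2 : min (c * v 0) (min (c * v 1) 0) = -(max ((-c) * v 0) (max ((-c) * v 1) 0)) := by
      conv_lhs => rw [hca (v 0), hca (v 1), ← neg_zero (G := ℝ)]
      rw [min_neg_neg, min_neg_neg]
    have e1' : min ((-c) * v 0) (min ((-c) * v 1) 0) = (-c) * min (v 0) (min (v 1) 0) := by
      rw [mul_min_of_nonneg _ _ hd, mul_min_of_nonneg _ _ hd, mul_zero]
    have e2' : max ((-c) * v 0) (max ((-c) * v 1) 0) = (-c) * max (v 0) (max (v 1) 0) := by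
      rw [mul_max_of_nonneg _ _ hd, mul_max_of_nonneg _ _ hd, mul_zero]
    rw [e1, e2, e1', e2', abs_of_nonpos hc]
    ring

lemma Ntri_add (v w : EuclideanSpace ℝ (Fin 2)) : Ntri (v + w) ≤ Ntri v + Ntri w := by
  have h0 : (v + w) 0 = v 0 + w 0 := by simp [PiLp.add_apply]
  have h1 : (v + w) 1 = v 1 + w 1 := by simp [PiLp.add_apply]
  unfold Ntri
  rw [h0, h1]
  have hmax : max (v 0 + w 0) (max (v 1 + w 1) 0) ≤
      max (v 0) (max (v 1) 0) + max (w 0) (max (w 1) 0) := by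
    apply max_le
    · exact add_le_add (le_max_left _ _) (le_max_left _ _)
    apply max_le
    · exact add_le_add (le_max_of_le_right (le_max_left _ _))
        (le_max_of_le_right (le_max_left _ _))
    · have g1 : (0:ℝ) ≤ max (v 0) (max (v 1) 0) := le_max_of_le_right (le_max_right _ _)
      have g2 : (0:ℝ) ≤ max (w 0) (max (w 1) 0) := le_max_of_le_right (le_max_right _ _)
      linarith
  have hmin : min (v 0) (min (v 1) 0) + min (w 0) (min (w 1) 0) ≤
      min (v 0 + w 0) (min (v 1 + w 1) 0) := by
    apply le_min
    · exact add_le_add (min_le_left _ _) (min_le_left _ _)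
    apply le_min
    · exact add_le_add (min_le_of_right_le (min_le_left _ _))
        (min_le_of_right_le (min_le_left _ _))
    · have g1 : min (v 0) (min (v 1) 0) ≤ (0:ℝ) := min_le_of_right_le (min_le_right _ _)
      have g2 : min (w 0) (min (w 1) 0) ≤ (0:ℝ) := min_le_of_right_le (min_le_right _ _)
      linarith
  linarith

lemma Mratio_pos {x y : EuclideanSpace ℝ (Fin 2)} (hx : x ∈ openTriangle)
    (hy : y ∈ openTriangle) : 0 < Mratio x y := by
  obtain ⟨hx0, hx1, hxs⟩ := hx
  obtain ⟨hy0, hy1, hys⟩ := hy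
  exact lt_max_of_lt_left (div_pos hx0 hy0)

lemma one_le_Mratio {x y : EuclideanSpace ℝ (Fin 2)} (hx : x ∈ openTriangle)
    (hy : y ∈ openTriangle) : 1 ≤ Mratio x y := by
  obtain ⟨hx0, hx1, hxs⟩ := hx
  obtain ⟨hy0, hy1, hys⟩ := hy
  by_contra hcon
  push_neg at hcon
  rw [Mratio] at hcon
  have c0 := lt_of_le_of_lt (le_max_left _ _) hcon
  have c1 := lt_of_le_of_lt (le_max_of_le_right (le_max_left _ _)) hcon
  have c2 := lt_of_le_of_lt (le_max_of_le_right (le_max_right _ _)) hcon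
  rw [div_lt_one hy0] at c0
  rw [div_lt_one hy1] at c1
  rw [div_lt_one (by linarith)] at c2
  linarith

lemma Dtri_split {x y : EuclideanSpace ℝ (Fin 2)} (hx : x ∈ openTriangle)
    (hy : y ∈ openTriangle) :
    Dtri x y = (Real.log (Mratio x y) + Real.log (Mratio y x)) / 2 := by
  rw [Dtri, Real.log_mul (ne_of_gt (Mratio_pos hx hy)) (ne_of_gt (Mratio_pos hy hx))]

lemma Dtri_ge_log0 {x y : EuclideanSpace ℝ (Fin 2)} (hx : x ∈ openTriangle)
    (hy : y ∈ openTriangle) : Real.log ((x 0)/(y 0)) / 2 ≤ Dtri x y := by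
  rw [Dtri_split hx hy]
  have h1 : Real.log ((x 0)/(y 0)) ≤ Real.log (Mratio x y) :=
    Real.log_le_log (div_pos hx.1 hy.1) (le_max_left _ _)
  have h2 : 0 ≤ Real.log (Mratio y x) := Real.log_nonneg (one_le_Mratio hy hx)
  linarith

lemma Dtri_ge_log2 {x y : EuclideanSpace ℝ (Fin 2)} (hx : x ∈ openTriangle)
    (hy : y ∈ openTriangle) :
    Real.log ((1 - x 0 - x 1)/(1 - y 0 - y 1)) / 2 ≤ Dtri x y := by
  rw [Dtri_split hx hy]
  have hpos : 0 < (1 - x 0 - x 1)/(1 - y 0 - y 1) :=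
    div_pos (by linarith [hx.1, hx.2.1, hx.2.2]) (by linarith [hy.1, hy.2.1, hy.2.2])
  have h1 : Real.log ((1 - x 0 - x 1)/(1 - y 0 - y 1)) ≤ Real.log (Mratio x y) :=
    Real.log_le_log hpos (le_max_of_le_right (le_max_right _ _))
  have h2 : 0 ≤ Real.log (Mratio y x) := Real.log_nonneg (one_le_Mratio hy hx)
  linarith

lemma Dtri_eq_Ntri {x y : EuclideanSpace ℝ (Fin 2)} (hx : x ∈ openTriangle)
    (hy : y ∈ openTriangle) : Dtri x y = Ntri (phiTri x - phiTri y) := by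
  obtain ⟨hx0, hx1, hxs⟩ := hx
  obtain ⟨hy0, hy1, hys⟩ := hy
  have hX2 : (0:ℝ) < 1 - x 0 - x 1 := by linarith
  have hY2 : (0:ℝ) < 1 - y 0 - y 1 := by linarith
  set L0 : ℝ := Real.log (x 0) - Real.log (y 0) with hL0
  set L1 : ℝ := Real.log (x 1) - Real.log (y 1) with hL1
  set L2 : ℝ := Real.log (1 - x 0 - x 1) - Real.log (1 - y 0 - y 1) with hL2
  have hc0 : (phiTri x - phiTri y) 0 = L0 - L2 := by
    show Real.log (x 0 / (1 - x 0 - x 1)) - Real.log (y 0 / (1 - y 0 - y 1)) = L0 - L2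
    rw [Real.log_div (ne_of_gt hx0) (ne_of_gt hX2),
      Real.log_div (ne_of_gt hy0) (ne_of_gt hY2), hL0, hL2]
    ring
  have hc1 : (phiTri x - phiTri y) 1 = L1 - L2 := by
    show Real.log (x 1 / (1 - x 0 - x 1)) - Real.log (y 1 / (1 - y 0 - y 1)) = L1 - L2
    rw [Real.log_div (ne_of_gt hx1) (ne_of_gt hX2),
      Real.log_div (ne_of_gt hy1) (ne_of_gt hY2), hL1, hL2]
    ring
  have hMxy : Real.log (Mratio x y) = max L0 (max L1 L2) := by
    rw [Mratio, log_max2 _ _ (div_pos hx0 hy0)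
        (lt_max_of_lt_left (div_pos hx1 hy1)),
      log_max2 _ _ (div_pos hx1 hy1) (div_pos hX2 hY2),
      Real.log_div (ne_of_gt hx0) (ne_of_gt hy0),
      Real.log_div (ne_of_gt hx1) (ne_of_gt hy1),
      Real.log_div (ne_of_gt hX2) (ne_of_gt hY2)]
  have hMyx : Real.log (Mratio y x) = -(min L0 (min L1 L2)) := by
    rw [Mratio, log_max2 _ _ (div_pos hy0 hx0)
        (lt_max_of_lt_left (div_pos hy1 hx1)),
      log_max2 _ _ (div_pos hy1 hx1) (div_pos hY2 hX2),
      Real.log_div (ne_of_gt hy0) (ne_of_gt hx0),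
      Real.log_div (ne_of_gt hy1) (ne_of_gt hx1),
      Real.log_div (ne_of_gt hY2) (ne_of_gt hX2)]
    have r0 : Real.log (y 0) - Real.log (x 0) = -L0 := by rw [hL0]; ring
    have r1 : Real.log (y 1) - Real.log (x 1) = -L1 := by rw [hL1]; ring
    have r2 : Real.log (1 - y 0 - y 1) - Real.log (1 - x 0 - x 1) = -L2 := by rw [hL2]; ring
    rw [r0, r1, r2, max_neg_neg, max_neg_neg]
  have hN : Ntri (phiTri x - phiTri y) = (max L0 (max L1 L2) - min L0 (min L1 L2)) / 2 := by
    rw [Ntri, hc0, hc1]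
    have z : (0:ℝ) = L2 - L2 := by ring
    rw [z, max_sub_sub_right, max_sub_sub_right, min_sub_sub_right, min_sub_sub_right]
    ring
  rw [hN, Dtri_split ⟨hx0, hx1, hxs⟩ ⟨hy0, hy1, hys⟩, hMxy, hMyx]
  ring

lemma phiTri_bijOn : Set.BijOn phiTri openTriangle Set.univ := by
  refine ⟨fun x _ => Set.mem_univ _, ?_, ?_⟩
  · -- injective on the triangle
    intro x hx y hy hxy
    obtain ⟨hx0, hx1, hxs⟩ := hx
    obtain ⟨hy0, hy1, hys⟩ := hy
    have hX2 : (0:ℝ) < 1 - x 0 - x 1 := by linarith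
    have hY2 : (0:ℝ) < 1 - y 0 - y 1 := by linarith
    have h0 : Real.log (x 0 / (1 - x 0 - x 1)) = Real.log (y 0 / (1 - y 0 - y 1)) :=
      congrFun (congrArg WithLp.ofLp hxy) 0
    have h1 : Real.log (x 1 / (1 - x 0 - x 1)) = Real.log (y 1 / (1 - y 0 - y 1)) :=
      congrFun (congrArg WithLp.ofLp hxy) 1
    have e0 : x 0 / (1 - x 0 - x 1) = y 0 / (1 - y 0 - y 1) := by
      have := congrArg Real.exp h0
      rwa [Real.exp_log (div_pos hx0 hX2), Real.exp_log (div_pos hy0 hY2)] at this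
    have e1 : x 1 / (1 - x 0 - x 1) = y 1 / (1 - y 0 - y 1) := by
      have := congrArg Real.exp h1
      rwa [Real.exp_log (div_pos hx1 hX2), Real.exp_log (div_pos hy1 hY2)] at this
    rw [div_eq_div_iff (ne_of_gt hX2) (ne_of_gt hY2)] at e0 e1
    have hS : x 0 + x 1 = y 0 + y 1 := by linear_combination e0 + e1
    have hz0 : (x 0 - y 0) * (1 - x 0 - x 1) = 0 := by linear_combination e0 - x 0 * hS
    have hz1 : (x 1 - y 1) * (1 - x 0 - x 1) = 0 := by linear_combination e1 - x 1 * hS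
    have hx0y0 : x 0 = y 0 := by
      rcases mul_eq_zero.mp hz0 with h | h
      · linarith
      · linarith
    have hx1y1 : x 1 = y 1 := by
      rcases mul_eq_zero.mp hz1 with h | h
      · linarith
      · linarith
    ext i
    fin_cases i
    · exact hx0y0
    · exact hx1y1
  · -- surjective onto the plane
    intro w _
    set E : ℝ := Real.exp (w 0) with hE
    set F : ℝ := Real.exp (w 1) with hF
    have hE0 : 0 < E := Real.exp_pos _
    have hF0 : 0 < F := Real.exp_pos _
    have hden : (0:ℝ) < 1 + E + F := by linarith
    set z : ℝ := 1 / (1 + E + F) with hz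
    have hz0 : 0 < z := by positivity
    set x : EuclideanSpace ℝ (Fin 2) := !₂[E * z, F * z] with hxdef
    have hx0 : x 0 = E * z := rfl
    have hx1 : x 1 = F * z := rfl
    have hzsum : 1 - x 0 - x 1 = z := by
      rw [hx0, hx1]
      have h : z * (1 + E + F) = 1 := by rw [hz]; field_simp
      linear_combination -h
    have hmem : x ∈ openTriangle := by
      refine ⟨by rw [hx0]; positivity, by rw [hx1]; positivity, ?_⟩
      rw [hx0, hx1]
      have h' := hzsum
      rw [hx0, hx1] at h'
      linarith
    refine ⟨x, hmem, ?_⟩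
    ext i
    fin_cases i
    · show Real.log (x 0 / (1 - x 0 - x 1)) = w 0
      rw [hzsum, hx0, mul_div_assoc, div_self (ne_of_gt hz0), mul_one, hE, Real.log_exp]
    · show Real.log (x 1 / (1 - x 0 - x 1)) = w 1
      rw [hzsum, hx1, mul_div_assoc, div_self (ne_of_gt hz0), mul_one, hF, Real.log_exp]

lemma segment_subset_openTriangle {a b : EuclideanSpace ℝ (Fin 2)}
    (ha : a ∈ openTriangle) (hb : b ∈ openTriangle) :
    segment ℝ a b ⊆ openTriangle := by
  intro y hy
  obtain ⟨u, v, hu, hv, huv, rfl⟩ := hy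
  obtain ⟨ha0, ha1, has⟩ := ha
  obtain ⟨hb0, hb1, hbs⟩ := hb
  have hc0 : (u • a + v • b) 0 = u * a 0 + v * b 0 := by
    simp [PiLp.add_apply, PiLp.smul_apply, smul_eq_mul]
  have hc1 : (u • a + v • b) 1 = u * a 1 + v * b 1 := by
    simp [PiLp.add_apply, PiLp.smul_apply, smul_eq_mul]
  have hposgen : ∀ p q : ℝ, 0 < p → 0 < q → 0 < u * p + v * q := by
    intro p q hp hq
    have h1 : u * min p q ≤ u * p := mul_le_mul_of_nonneg_left (min_le_left _ _) hu
    have h2 : v * min p q ≤ v * q := mul_le_mul_of_nonneg_left (min_le_right _ _) hv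
    have hm : 0 < min p q := lt_min hp hq
    have he : (u + v) * min p q = min p q := by rw [huv, one_mul]
    nlinarith
  refine ⟨?_, ?_, ?_⟩
  · rw [hc0]; exact hposgen _ _ ha0 hb0
  · rw [hc1]; exact hposgen _ _ ha1 hb1
  · rw [hc0, hc1]
    have hs1 : max (a 0 + a 1) (b 0 + b 1) < 1 := max_lt has hbs
    have h1 : u * (a 0 + a 1) ≤ u * max (a 0 + a 1) (b 0 + b 1) :=
      mul_le_mul_of_nonneg_left (le_max_left _ _) hu
    have h2 : v * (b 0 + b 1) ≤ v * max (a 0 + a 1) (b 0 + b 1) :=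
      mul_le_mul_of_nonneg_left (le_max_right _ _) hv
    have he : (u + v) * max (a 0 + a 1) (b 0 + b 1) = max (a 0 + a 1) (b 0 + b 1) := by
      rw [huv, one_mul]
    nlinarith

lemma combo_apply (u v : ℝ) (a b : EuclideanSpace ℝ (Fin 2)) (i : Fin 2) :
    (u • a + v • b) i = u * a i + v * b i := by
  simp [PiLp.add_apply, PiLp.smul_apply, smul_eq_mul]

/-- **The Hilbert metric of a triangle is a norm metric, hence not thin.** The open
triangle `Δ ⊂ RP²` with its Hilbert metric is isometric to a 2-dimensional normed
vector space; in particular `(Δ, d_Δ)` does not have thin triangles: there is no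
`δ > 0` such that for every triangle with vertices in `Δ` each side lies in the
`δ`-neighborhood of the union of the other two sides. -/
theorem triangle_hilbert_isometric_to_norm_and_not_thin :
    (∃ (N : EuclideanSpace ℝ (Fin 2) → ℝ) (φ : EuclideanSpace ℝ (Fin 2) → EuclideanSpace ℝ (Fin 2)),
      (∀ v, 0 ≤ N v) ∧ (∀ v, N v = 0 ↔ v = 0) ∧
      (∀ (c : ℝ) (v), N (c • v) = |c| * N v) ∧
      (∀ v w, N (v + w) ≤ N v + N w) ∧
      Set.BijOn φ openTriangle Set.univ ∧
      (∀ x ∈ openTriangle, ∀ y ∈ openTriangle,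
        hilbertDist openTriangle x y = N (φ x - φ y))) ∧
    ¬ ∃ δ : ℝ, 0 < δ ∧ ∀ a ∈ openTriangle, ∀ b ∈ openTriangle, ∀ c ∈ openTriangle,
      ∀ x ∈ segment ℝ a b, ∃ y ∈ segment ℝ a c ∪ segment ℝ b c,
        hilbertDist openTriangle x y ≤ δ := by
  constructor
  · refine ⟨Ntri, phiTri, Ntri_nonneg, Ntri_eq_zero, Ntri_smul, Ntri_add, phiTri_bijOn, ?_⟩
    intro x hx y hy
    rw [hilbertDist_eq_Dtri x y hx hy, Dtri_eq_Ntri hx hy]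
  · rintro ⟨δ, hδ, hthin⟩
    set E : ℝ := Real.exp (2*δ) with hEdef
    have hE0 : 0 < E := Real.exp_pos _
    have hE1 : 1 < E := by
      calc (1:ℝ) = Real.exp 0 := Real.exp_zero.symm
      _ < Real.exp (2*δ) := Real.exp_lt_exp.mpr (by linarith)
    have hden : (0:ℝ) < 2*E+2 := by linarith
    set ε : ℝ := 1/(2*E+2) with hεdef
    have hε0 : 0 < ε := by positivity
    have hεE : ε * (2*E+2) = 1 := by rw [hεdef]; field_simp
    have hε4 : ε < 1/4 := by nlinarith
    set A : EuclideanSpace ℝ (Fin 2) := !₂[ε, ε] with hAdef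
    set B : EuclideanSpace ℝ (Fin 2) := !₂[1-2*ε, ε] with hBdef
    set C : EuclideanSpace ℝ (Fin 2) := !₂[ε, 1-2*ε] with hCdef
    set X : EuclideanSpace ℝ (Fin 2) := !₂[(1-ε)/2, ε] with hXdef
    have hA0 : A 0 = ε := rfl
    have hA1 : A 1 = ε := rfl
    have hB0 : B 0 = 1-2*ε := rfl
    have hB1 : B 1 = ε := rfl
    have hC0 : C 0 = ε := rfl
    have hC1 : C 1 = 1-2*ε := rfl
    have hX0 : X 0 = (1-ε)/2 := rfl
    have hX1 : X 1 = ε := rfl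
    have hA : A ∈ openTriangle := by
      refine ⟨?_, ?_, ?_⟩
      · rw [hA0]; linarith
      · rw [hA1]; linarith
      · rw [hA0, hA1]; linarith
    have hB : B ∈ openTriangle := by
      refine ⟨?_, ?_, ?_⟩
      · rw [hB0]; linarith
      · rw [hB1]; linarith
      · rw [hB0, hB1]; linarith
    have hC : C ∈ openTriangle := by
      refine ⟨?_, ?_, ?_⟩
      · rw [hC0]; linarith
      · rw [hC1]; linarith
      · rw [hC0, hC1]; linarith
    have hX : X ∈ openTriangle := by
      refine ⟨?_, ?_, ?_⟩
      · rw [hX0]; linarith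
      · rw [hX1]; linarith
      · rw [hX0, hX1]; linarith
    have hXseg : X ∈ segment ℝ A B := by
      refine ⟨1/2, 1/2, by norm_num, by norm_num, by norm_num, ?_⟩
      ext i
      rw [combo_apply]
      fin_cases i
      · show (1/2:ℝ) * ε + (1/2:ℝ) * (1-2*ε) = (1-ε)/2
        ring
      · show (1/2:ℝ) * ε + (1/2:ℝ) * ε = ε
        ring
    obtain ⟨y, hy, hdist⟩ := hthin A hA B hB C hC X hXseg
    have hyΔ : y ∈ openTriangle := by
      rcases hy with hy | hy
      · exact segment_subset_openTriangle hA hC hy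
      · exact segment_subset_openTriangle hB hC hy
    rw [hilbertDist_eq_Dtri X y hX hyΔ] at hdist
    have hbig : 2*δ < Real.log ((1-ε)/(2*ε)) := by
      have harg : E < (1-ε)/(2*ε) := by
        rw [lt_div_iff₀ (by positivity)]
        nlinarith
      calc 2*δ = Real.log E := by rw [hEdef, Real.log_exp]
      _ < Real.log ((1-ε)/(2*ε)) := Real.log_lt_log hE0 harg
    rcases hy with hy | hy
    · -- y on segment A C : first coordinate is ε
      obtain ⟨u, v, hu, hv, huv, hyeq⟩ := hy
      have hy0 : y 0 = ε := by
        rw [← hyeq, combo_apply, hA0, hC0]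
        linear_combination ε * huv
      have hlb := Dtri_ge_log0 hX hyΔ
      rw [hX0, hy0, div_div] at hlb
      linarith
    · -- y on segment B C : third barycentric coordinate is ε
      obtain ⟨u, v, hu, hv, huv, hyeq⟩ := hy
      have hy2 : 1 - y 0 - y 1 = ε := by
        have h0 : y 0 = u * (1-2*ε) + v * ε := by rw [← hyeq, combo_apply, hB0, hC0]
        have h1 : y 1 = u * ε + v * (1-2*ε) := by rw [← hyeq, combo_apply, hB1, hC1]
        rw [h0, h1]
        linear_combination (-(1:ℝ)+ε) * huv
      have hlb := Dtri_ge_log2 hX hyΔ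
      have hX2 : 1 - X 0 - X 1 = (1-ε)/2 := by rw [hX0, hX1]; ring
      rw [hX2, hy2, div_div] at hlb
      linarith
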